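/- For positive integers n ≥ 1 and 0 ≤ d ≤ n, the number of binary Lyndon words of length n and density d equals (1/n) · Σ_{j | gcd(n,d)} μ(j) · C(n/j, d/j), where μ is the Möbius function. -/

import Mathlib

/-- `w` is a necklace: lexicographically ≤ all of its rotations. -/
def IsNecklace (w : List ℕ) : Prop := ∀ i : ℕ, w ≤ w.rotate i

/-- `w` is a Lyndon word: nonempty and strictly smaller than all nontrivial rotations. -/
def IsLyndon (w : List ℕ) : Prop :=
  w ≠ [] ∧ ∀ i : ℕ, 0 < i → i < w.length → w < w.rotate i

/-- `w` is a prenecklace over the alphabet `{0,…,k-1}`. -/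
def IsPrenecklace (k : ℕ) (w : List ℕ) : Prop :=
  ∃ v : List ℕ, w <+: v ∧ (∀ a ∈ v, a < k) ∧ IsNecklace v

/-- Length of the longest prefix of `w` that is a Lyndon word. -/
noncomputable def lyn (w : List ℕ) : ℕ :=
  sSup {p | p ≤ w.length ∧ IsLyndon (w.take p)}

/-- Number of binary necklaces of length `n` and density `d`. -/
noncomputable def N (n d : ℕ) : ℕ :=
  {w : List ℕ | w.length = n ∧ (∀ a ∈ w, a < 2) ∧ w.count 1 = d ∧ IsNecklace w}.ncard

/-- Number of binary Lyndon words of length `n` and density `d`. -/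
noncomputable def L (n d : ℕ) : ℕ :=
  {w : List ℕ | w.length = n ∧ (∀ a ∈ w, a < 2) ∧ w.count 1 = d ∧ IsLyndon w}.ncard

/-- Number of necklaces over `{0,…,k-1}` with content `c`. -/
noncomputable def Nk (k : ℕ) (c : Fin k → ℕ) : ℕ :=
  {w : List ℕ | (∀ a ∈ w, a < k) ∧ (∀ i : Fin k, w.count i.val = c i) ∧ IsNecklace w}.ncard

/-- Number of Lyndon words over `{0,…,k-1}` with content `c`. -/
noncomputable def Lk (k : ℕ) (c : Fin k → ℕ) : ℕ :=
  {w : List ℕ | (∀ a ∈ w, a < k) ∧ (∀ i : Fin k, w.count i.val = c i) ∧ IsLyndon w}.ncard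


section LyndonCountAux
open List

/-- `rep u k` is `u` repeated `k` times. -/
def rep (u : List ℕ) : ℕ → List ℕ
  | 0 => []
  | k+1 => u ++ rep u k

@[simp] lemma rep_zero (u : List ℕ) : rep u 0 = [] := rfl
@[simp] lemma rep_succ (u : List ℕ) (k : ℕ) : rep u (k+1) = u ++ rep u k := rfl

@[simp] lemma length_rep (u : List ℕ) (k : ℕ) : (rep u k).length = k * u.length := by
  induction k with
  | zero => simp
  | succ k ih => simp [ih]; ring

@[simp] lemma count_rep (u : List ℕ) (k a : ℕ) : (rep u k).count a = k * u.count a := by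
  induction k with
  | zero => simp
  | succ k ih => simp [ih]; ring

lemma mem_rep {u : List ℕ} {k a : ℕ} (h : a ∈ rep u k) : a ∈ u := by
  induction k with
  | zero => simp at h
  | succ k ih => rcases (List.mem_append.1 h) with h | h; exact h; exact ih h

lemma rep_comm (u : List ℕ) (k : ℕ) : rep u k ++ u = u ++ rep u k := by
  induction k with
  | zero => simp
  | succ k ih => simp only [rep_succ, List.append_assoc, ih]

@[simp] lemma rep_one (u : List ℕ) : rep u 1 = u := by simp

lemma take_rep (u : List ℕ) (k : ℕ) (hk : 1 ≤ k) : (rep u k).take u.length = u := by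
  cases k with
  | zero => omega
  | succ k => simp [List.take_append]

/-- key identity for rotations of powers -/
lemma rep_sandwich (a b : List ℕ) (k : ℕ) :
    a ++ (rep (b ++ a) k ++ b) = rep (a ++ b) (k+1) := by
  induction k with
  | zero => simp
  | succ k ih =>
    calc a ++ (rep (b ++ a) (k+1) ++ b) = (a ++ b) ++ (a ++ (rep (b ++ a) k ++ b)) := by
          simp [List.append_assoc]
      _ = (a ++ b) ++ rep (a ++ b) (k+1) := by rw [ih]
      _ = rep (a ++ b) (k+2) := by simp

lemma rotate_rep (u : List ℕ) (k q : ℕ) (hq : q ≤ u.length) :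
    (rep u k).rotate q = rep (u.rotate q) k := by
  cases k with
  | zero => simp [rotate_eq_drop_append_take]
  | succ k =>
    have hlen : q ≤ (rep u (k+1)).length := by simp; nlinarith
    rw [rotate_eq_drop_append_take hlen, rotate_eq_drop_append_take hq]
    have hdrop : (rep u (k+1)).drop q = u.drop q ++ rep u k := by
      simp [List.drop_append_of_le_length hq]
    have htake : (rep u (k+1)).take q = u.take q := by
      simp [List.take_append_of_le_length hq]
    rw [hdrop, htake, List.append_assoc]
    have := rep_sandwich (u.drop q) (u.take q) k
    simpa [List.take_append_drop] using this

lemma per_exists {w : List ℕ} (hw : w ≠ []) :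
    ∃ p, 0 < p ∧ p ≤ w.length ∧ w.rotate p = w :=
  ⟨w.length, List.length_pos_iff.2 hw, le_rfl, w.rotate_length⟩

/-- minimal period of a nonempty word -/
noncomputable def per (w : List ℕ) : ℕ :=
  if h : w = [] then 0 else Nat.find (per_exists h)

lemma per_spec {w : List ℕ} (hw : w ≠ []) :
    0 < per w ∧ per w ≤ w.length ∧ w.rotate (per w) = w := by
  rw [per, dif_neg hw]; exact Nat.find_spec (per_exists hw)

lemma per_pos {w : List ℕ} (hw : w ≠ []) : 0 < per w := (per_spec hw).1
lemma per_le {w : List ℕ} (hw : w ≠ []) : per w ≤ w.length := (per_spec hw).2.1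
lemma rotate_per {w : List ℕ} (hw : w ≠ []) : w.rotate (per w) = w := (per_spec hw).2.2

lemma per_min {w : List ℕ} (hw : w ≠ []) {q : ℕ} (h0 : 0 < q) (hq : q < per w)
    (hle : q ≤ w.length) : w.rotate q ≠ w := by
  have := Nat.find_min (per_exists hw) (by rwa [per, dif_neg hw] at hq)
  intro hrot; exact this ⟨h0, hle, hrot⟩

/-- the stabilizer is the set of multiples of the minimal period -/
lemma per_dvd_of_rotate_eq {w : List ℕ} (hw : w ≠ []) {i : ℕ} (hi : w.rotate i = w) :
    per w ∣ i := by
  set p := per w with hp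
  have hppos := per_pos hw
  have hrot_mul : ∀ q, w.rotate (p * q) = w := by
    intro q
    induction q with
    | zero => simp
    | succ q ih =>
      have : w.rotate (p * q + p) = w := by
        rw [← List.rotate_rotate, ih, rotate_per hw]
      simpa [Nat.mul_succ] using this
  have hr : w.rotate (i % p) = w := by
    have heq : w.rotate i = w.rotate (i % p) := by
      conv_lhs => rw [show i = p * (i/p) + i % p from (Nat.div_add_mod i p).symm]
      rw [← List.rotate_rotate, hrot_mul]
    rw [← heq, hi]
  by_contra hnd
  have h0 : 0 < i % p := Nat.pos_of_ne_zero (fun h => hnd (Nat.dvd_of_mod_eq_zero h))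
  have hlt : i % p < p := Nat.mod_lt _ hppos
  exact per_min hw h0 hlt (le_trans hlt.le (per_le hw)) hr

lemma per_dvd_length {w : List ℕ} (hw : w ≠ []) : per w ∣ w.length :=
  per_dvd_of_rotate_eq hw w.rotate_length

lemma eq_rep_of_rotate : ∀ (N : ℕ) (w : List ℕ) (p : ℕ), w.length ≤ N → 0 < p →
    w.rotate p = w → p ∣ w.length → w = rep (w.take p) (w.length / p) := by
  intro N
  induction N with
  | zero =>
    intro w p hN hp hrot hdvd
    have : w = [] := List.eq_nil_of_length_eq_zero (by omega)
    subst this; simp [rep_zero]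
  | succ N ih =>
    intro w p hN hp hrot hdvd
    rcases Nat.lt_or_ge w.length p with hlt | hge
    · have h0 : w.length = 0 := Nat.eq_zero_of_dvd_of_lt hdvd hlt
      have : w = [] := List.eq_nil_of_length_eq_zero h0
      subst this; simp [rep_zero]
    · rcases Nat.eq_or_lt_of_le hge with heq | hlt
      · have h1 : w.take p = w := List.take_of_length_le (le_of_eq heq.symm)
        rw [h1, heq, Nat.div_self (by omega), rep_one]
      · set u := w.take p with hu
        set v := w.drop p with hv
        have hw_uv : u ++ v = w := List.take_append_drop p w
        have hple : p ≤ w.length := hge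
        have hvu : v ++ u = w := by
          rw [List.rotate_eq_drop_append_take hple] at hrot; exact hrot
        have hlenv : v.length = w.length - p := by simp [hv]
        have hlenu : u.length = p := by rw [hu, List.length_take]; omega
        obtain ⟨c, hc⟩ := hdvd
        have hc2 : 2 ≤ c := by nlinarith
        obtain ⟨c', rfl⟩ : ∃ c', c = c' + 1 := ⟨c-1, by omega⟩
        have hc' : w.length = p * c' + p := by rw [hc, Nat.mul_succ]
        have hc1' : 1 ≤ c' := by omega
        have hppc : p ≤ p * c' := Nat.le_mul_of_pos_right p (by omega)
        have hvlen : v.length = p * c' := by omega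
        have hpv : p ≤ v.length := by omega
        have htpv : v.take p = u := by
          have h1 : (v ++ u).take p = v.take p := List.take_append_of_le_length hpv
          have h2 : (u ++ v).take p = u := by
            rw [List.take_append_of_le_length (by omega)]
            exact List.take_of_length_le (le_of_eq hlenu)
          rw [hw_uv] at h2; rw [hvu] at h1; rw [h1] at h2; exact h2
        have hrotv : v.rotate p = v := by
          rw [List.rotate_eq_drop_append_take hpv, htpv]
          -- need : drop p v ++ u = v, knowing v = u ++ drop p v and u ++ v = v ++ u
          have hsplit : v.take p ++ v.drop p = v := List.take_append_drop p v
          rw [htpv] at hsplit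
          -- v = u ++ v.drop p ; also u ++ v = v ++ u
          have h3 : u ++ (u ++ v.drop p) = (u ++ v.drop p) ++ u := by
            conv_lhs => rw [hsplit, hw_uv, ← hvu, ← hsplit]
          have h3' : u ++ (u ++ v.drop p) = u ++ (v.drop p ++ u) := by
            simpa [List.append_assoc] using h3
          have h4 : u ++ v.drop p = v.drop p ++ u := List.append_cancel_left h3'
          rw [← h4, hsplit]
        have hvN : v.length ≤ N := by omega
        have hrec := ih v p hvN hp hrotv ⟨c', hvlen⟩
        rw [htpv] at hrec
        have hstep : w = u ++ v := hw_uv.symm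
        have e1 : w.length / p = c' + 1 := by rw [hc, Nat.mul_div_cancel_left _ hp]
        have e2 : v.length / p = c' := by rw [hvlen, Nat.mul_div_cancel_left _ hp]
        have hfin : w = rep u (c' + 1) := by
          calc w = u ++ v := hstep
            _ = u ++ rep u c' := by rw [hrec, e2]
            _ = rep u (c' + 1) := (rep_succ u c').symm
        rw [e1]
        exact hfin

/-- primitive (aperiodic) word -/
def Prim (w : List ℕ) : Prop := w ≠ [] ∧ per w = w.length

noncomputable def primRoot (w : List ℕ) : List ℕ := w.take (per w)

lemma primRoot_length {w : List ℕ} (hw : w ≠ []) : (primRoot w).length = per w := by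
  rw [primRoot, List.length_take]
  exact min_eq_left (per_le hw)

lemma primRoot_ne_nil {w : List ℕ} (hw : w ≠ []) : primRoot w ≠ [] := by
  intro h
  have h1 := primRoot_length hw
  rw [h] at h1
  simp at h1
  have := per_pos hw
  omega

lemma eq_rep_primRoot {w : List ℕ} (hw : w ≠ []) :
    w = rep (primRoot w) (w.length / per w) :=
  eq_rep_of_rotate w.length w (per w) le_rfl (per_pos hw) (rotate_per hw) (per_dvd_length hw)

/-- if `w = rep u k` with `u` nonempty and `k ≥ 1` then rotating by `u.length` fixes `w` -/
lemma rotate_rep_self (u : List ℕ) (k : ℕ) : (rep u k).rotate u.length = rep u k := by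
  rw [rotate_rep u k u.length le_rfl, List.rotate_length]

lemma per_rep_dvd {u : List ℕ} (hu : u ≠ []) (k : ℕ) (hk : 1 ≤ k) :
    per (rep u k) ∣ u.length := by
  have hne : rep u k ≠ [] := by
    intro h
    have := length_rep u k
    rw [h] at this
    simp at this
    rcases this with h | h
    · omega
    · exact hu h
  exact per_dvd_of_rotate_eq hne (rotate_rep_self u k)

lemma rep_ne_nil {u : List ℕ} (hu : u ≠ []) {k : ℕ} (hk : 1 ≤ k) : rep u k ≠ [] := by
  intro h
  have := length_rep u k
  rw [h] at this
  simp at this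
  rcases this with h | h
  · omega
  · exact hu h

/-- the primitive root is primitive -/
lemma prim_primRoot {w : List ℕ} (hw : w ≠ []) : Prim (primRoot w) := by
  refine ⟨primRoot_ne_nil hw, ?_⟩
  set r := primRoot w with hr
  have hrne : r ≠ [] := primRoot_ne_nil hw
  have hrlen : r.length = per w := primRoot_length hw
  by_contra hne
  have hq : per r < r.length := lt_of_le_of_ne (per_le hrne) hne
  have hq0 : 0 < per r := per_pos hrne
  -- rotating w by per r fixes w
  have hrotw : w.rotate (per r) = w := by
    conv_lhs => rw [eq_rep_primRoot hw]
    rw [rotate_rep _ _ _ (le_of_lt hq), rotate_per hrne, ← eq_rep_primRoot hw]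
  have := per_dvd_of_rotate_eq hw hrotw
  have h1 : per w ≤ per r := Nat.le_of_dvd hq0 this
  omega

/-- uniqueness: a primitive word whose power is `w` equals the primitive root -/
lemma prim_rep_unique {w u : List ℕ} (hw : w ≠ []) (hu : Prim u) {k : ℕ}
    (hk : 1 ≤ k) (hrep : w = rep u k) : u = primRoot w ∧ k = w.length / per w := by
  have hune : u ≠ [] := hu.1
  have hulen : 0 < u.length := List.length_pos_iff.2 hune
  have hpd : per w ∣ u.length := by
    rw [hrep]; exact per_rep_dvd hune k hk
  have hple : per w ≤ u.length := Nat.le_of_dvd hulen hpd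
  have hwp := per_pos hw
  -- u is determined: rotate per w fixes u
  have hrotu : u.rotate (per w) = u := by
    have h1 : (rep u k).rotate (per w) = rep u k := by
      rw [← hrep]; exact rotate_per hw
    rw [rotate_rep _ _ _ hple] at h1
    -- rep (u.rotate per) k = rep u k , equal lengths, take
    have h2 : (rep (u.rotate (per w)) k).take (u.rotate (per w)).length
        = (rep u k).take u.length := by rw [h1]; simp [List.length_rotate]
    rw [take_rep _ _ hk, take_rep _ _ hk] at h2
    exact h2
  have hdvd2 : per u ∣ per w := per_dvd_of_rotate_eq hune hrotu
  have : per u ≤ per w := Nat.le_of_dvd hwp hdvd2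
  have heq : u.length = per w := by
    have := hu.2
    omega
  constructor
  · -- u = take (per w) w
    have h5 : w.take (per w) = u := by
      rw [← heq]
      conv_lhs => rw [hrep]
      exact take_rep _ _ hk
    rw [primRoot, h5]
  · have hlw : w.length = k * u.length := by rw [hrep, length_rep]
    rw [hlw, heq, Nat.mul_div_cancel _ hwp]

lemma rotate_sub_eq_self {w : List ℕ} {i j : ℕ} (hji : j ≤ i)
    (h : w.rotate i = w.rotate j) : w.rotate (i - j) = w := by
  have h1 : (w.rotate (i-j)).rotate j = w.rotate j := by
    rw [List.rotate_rotate, show i - j + j = i by omega, h]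
  exact List.rotate_eq_rotate.1 h1

lemma per_rotate {w : List ℕ} (hw : w ≠ []) (i : ℕ) : per (w.rotate i) = per w := by
  have hne : w.rotate i ≠ [] := by
    intro h
    have := List.length_rotate w i
    rw [h] at this
    simp at this
    exact hw (List.eq_nil_of_length_eq_zero this.symm)
  have key : ∀ j, (w.rotate i).rotate j = w.rotate i ↔ w.rotate j = w := by
    intro j
    constructor
    · intro h
      rw [List.rotate_rotate, show i + j = j + i by omega, ← List.rotate_rotate] at h
      exact List.rotate_eq_rotate.1 h
    · intro h
      rw [List.rotate_rotate, show i + j = j + i by omega, ← List.rotate_rotate, h]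
  have h1 : per (w.rotate i) ∣ per w :=
    per_dvd_of_rotate_eq hne ((key (per w)).2 (rotate_per hw))
  have h2 : per w ∣ per (w.rotate i) :=
    per_dvd_of_rotate_eq hw ((key (per (w.rotate i))).1 (rotate_per hne))
  exact Nat.dvd_antisymm h1 h2

lemma rotate_ne_nil {w : List ℕ} (hw : w ≠ []) (i : ℕ) : w.rotate i ≠ [] := by
  intro h
  have := List.length_rotate w i
  rw [h] at this
  simp at this
  exact hw (List.eq_nil_of_length_eq_zero this.symm)

/-! ### Counting -/

open Finset

/-- all binary words of length `n` as a Finset -/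
def binW (n : ℕ) : Finset (List ℕ) :=
  (Finset.univ : Finset (Fin n → Fin 2)).image (fun f => List.ofFn fun i => (f i : ℕ))

lemma mem_binW {n : ℕ} {w : List ℕ} :
    w ∈ binW n ↔ w.length = n ∧ ∀ a ∈ w, a < 2 := by
  constructor
  · rintro hw
    rw [binW, Finset.mem_image] at hw
    obtain ⟨f, -, rfl⟩ := hw
    refine ⟨by simp, ?_⟩
    intro a ha
    rw [List.mem_ofFn] at ha
    obtain ⟨i, rfl⟩ := ha
    exact (f i).2
  · rintro ⟨hlen, hbd⟩
    rw [binW, Finset.mem_image]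
    refine ⟨fun i => ⟨w.get (Fin.cast hlen.symm i), ?_⟩, Finset.mem_univ _, ?_⟩
    · apply hbd
      exact List.getElem_mem _
    · apply List.ext_getElem (by simp [hlen])
      intro i h1 h2
      simp [List.getElem_ofFn]

lemma count_ofFn {n : ℕ} (g : Fin n → ℕ) (a : ℕ) :
    (List.ofFn g).count a = (univ.filter fun i => g i = a).card := by
  induction n with
  | zero => simp
  | succ n ih =>
    have h1 : (List.ofFn g).count a
        = (List.ofFn (fun i : Fin n => g i.succ)).count a + if g 0 = a then 1 else 0 := by
      rw [List.ofFn_succ, List.count_cons]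
      simp [beq_iff_eq]
    have h2 : (univ.filter fun i : Fin (n+1) => g i = a).card
        = (univ.filter fun i : Fin n => g i.succ = a).card + if g 0 = a then 1 else 0 := by
      rw [Finset.card_filter, Finset.card_filter, Fin.sum_univ_succ]
      simp [add_comm]
    rw [h1, h2, ih]

lemma getD_ofFn {n : ℕ} (g : Fin n → ℕ) (i : Fin n) :
    (List.ofFn g).getD i 0 = g i := by
  rw [List.getD_eq_getElem _ _ (by simp [i.2]), List.getElem_ofFn]

/-- binary words with prescribed density -/
def Wf (n d : ℕ) : Finset (List ℕ) := (binW n).filter (fun w => w.count 1 = d)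

lemma mem_Wf {n d : ℕ} {w : List ℕ} :
    w ∈ Wf n d ↔ w.length = n ∧ (∀ a ∈ w, a < 2) ∧ w.count 1 = d := by
  rw [Wf, Finset.mem_filter, mem_binW]; tauto

lemma card_Wf (n d : ℕ) : (Wf n d).card = n.choose d := by
  have hpc : n.choose d = (Finset.powersetCard d (univ : Finset (Fin n))).card := by
    rw [Finset.card_powersetCard]; simp
  rw [hpc]
  apply Finset.card_bij (fun w _ => (univ : Finset (Fin n)).filter (fun i => w.getD i 0 = 1))
  · -- maps into powersetCard
    intro w hw
    rw [mem_Wf] at hw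
    obtain ⟨hlen, hbd, hcnt⟩ := hw
    rw [Finset.mem_powersetCard]
    refine ⟨Finset.filter_subset _ _, ?_⟩
    -- card = count 1 = d
    have hofn : List.ofFn (fun i : Fin n => w.getD i 0) = w := by
      apply List.ext_getElem (by simp [hlen])
      intro i h1 h2
      rw [List.getElem_ofFn]
      exact List.getD_eq_getElem _ _ _
    rw [← hcnt, ← hofn, count_ofFn]
    congr 1
    ext i
    simp only [getD_ofFn]
  · -- injective
    intro w hw w' hw' heq
    rw [mem_Wf] at hw hw'
    apply List.ext_getElem (by omega)
    intro i h1 h2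
    have hi : i < n := by omega
    have e1 : w.getD i 0 = w[i] := List.getD_eq_getElem _ _ h1
    have e2 : w'.getD i 0 = w'[i] := List.getD_eq_getElem _ _ h2
    have hmem := Finset.ext_iff.1 heq ⟨i, hi⟩
    simp only [Finset.mem_filter, Finset.mem_univ, true_and] at hmem
    have b1 : w[i] < 2 := hw.2.1 _ (List.getElem_mem _)
    have b2 : w'[i] < 2 := hw'.2.1 _ (List.getElem_mem _)
    rw [e1, e2] at hmem
    omega
  · -- surjective
    intro s hs
    rw [Finset.mem_powersetCard] at hs
    refine ⟨List.ofFn (fun i : Fin n => if i ∈ s then 1 else 0), ?_, ?_⟩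
    · rw [mem_Wf]
      refine ⟨by simp, ?_, ?_⟩
      · intro a ha
        rw [List.mem_ofFn] at ha
        obtain ⟨i, rfl⟩ := ha
        split <;> omega
      · rw [count_ofFn, ← hs.2]
        congr 1
        ext i
        simp only [Finset.mem_filter, Finset.mem_univ, true_and]
        split <;> simp_all
    · ext i
      simp only [Finset.mem_filter, Finset.mem_univ, true_and, getD_ofFn]
      split <;> simp_all

lemma per_rep_prim {u : List ℕ} (hu : Prim u) {k : ℕ} (hk : 1 ≤ k) :
    per (rep u k) = u.length := by
  have hune : u.length > 0 := List.length_pos_iff.2 hu.1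
  have hne : rep u k ≠ [] := rep_ne_nil hu.1 hk
  have hdvd : per (rep u k) ∣ u.length := per_rep_dvd hu.1 k hk
  have hle : per (rep u k) ≤ u.length := Nat.le_of_dvd hune hdvd
  rcases Nat.eq_or_lt_of_le hle with h | h
  · exact h
  · exfalso
    set p := per (rep u k) with hp
    have hrot : (rep u k).rotate p = rep u k := rotate_per hne
    rw [rotate_rep _ _ _ (le_of_lt h)] at hrot
    have htk : (rep (u.rotate p) k).take (u.rotate p).length = (rep u k).take u.length := by
      rw [hrot]; simp
    rw [take_rep _ _ hk, take_rep _ _ hk] at htk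
    have := per_dvd_of_rotate_eq hu.1 htk
    have h2 : per u ≤ p := Nat.le_of_dvd (per_pos hne) this
    rw [hu.2] at h2
    omega

open scoped Classical in
/-- primitive binary words with prescribed density -/
noncomputable def Pf (n d : ℕ) : Finset (List ℕ) := (Wf n d).filter (fun w => Prim w)

open scoped Classical in
lemma mem_Pf {n d : ℕ} {w : List ℕ} :
    w ∈ Pf n d ↔ w.length = n ∧ (∀ a ∈ w, a < 2) ∧ w.count 1 = d ∧ Prim w := by
  rw [Pf]
  classical
  rw [Finset.mem_filter, mem_Wf]
  tauto

/-- Lemma (II): fiberwise decomposition by primitive root -/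
lemma card_Wf_eq_sum (n d : ℕ) (hn : 1 ≤ n) (hd : d ≤ n) :
    (Wf n d).card = ∑ j ∈ (Nat.gcd n d).divisors, (Pf (n / j) (d / j)).card := by
  classical
  set g := Nat.gcd n d with hg
  have hg0 : 0 < g := Nat.gcd_pos_of_pos_left d hn
  -- fiber map: number of repetitions of the primitive root
  apply Finset.card_eq_sum_card_fiberwise
    (f := fun w => n / per w) (t := g.divisors) ?_ |>.trans ?_
  · -- maps into divisors
    intro w hw
    rw [Finset.mem_coe, mem_Wf] at hw
    obtain ⟨hlen, hbd, hcnt⟩ := hw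
    have hwne : w ≠ [] := by
      intro h; rw [h] at hlen; simp at hlen; omega
    have hpd : per w ∣ n := by rw [← hlen]; exact per_dvd_length hwne
    have hkn : n / per w ∣ n := Nat.div_dvd_of_dvd hpd
    have hkd : n / per w ∣ d := by
      have hrep := eq_rep_primRoot hwne
      rw [hlen] at hrep
      have : w.count 1 = (n / per w) * (primRoot w).count 1 := by
        conv_lhs => rw [hrep]
        rw [count_rep]
      rw [hcnt] at this
      exact ⟨_, this⟩
    rw [Finset.mem_coe, Nat.mem_divisors]
    exact ⟨Nat.dvd_gcd hkn hkd, by omega⟩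
  · -- each fiber has the size of the primitive count
    apply Finset.sum_congr rfl
    intro j hj
    rw [Nat.mem_divisors] at hj
    have hjg : j ∣ g := hj.1
    have hjn : j ∣ n := hjg.trans (Nat.gcd_dvd_left n d)
    have hjd : j ∣ d := hjg.trans (Nat.gcd_dvd_right n d)
    have hj0 : 0 < j := Nat.pos_of_dvd_of_pos hjn (by omega)
    have hnj0 : 0 < n / j := Nat.div_pos (Nat.le_of_dvd (by omega) hjn) hj0
    symm
    apply Finset.card_bij (fun u _ => rep u j)
    · -- well-defined
      intro u hu
      rw [mem_Pf] at hu
      obtain ⟨hulen, hubd, hucnt, huprim⟩ := hu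
      have hperrep : per (rep u j) = u.length := per_rep_prim huprim (by omega)
      rw [Finset.mem_filter, mem_Wf]
      refine ⟨⟨?_, ?_, ?_⟩, ?_⟩
      · rw [length_rep, hulen]; exact Nat.mul_div_cancel' hjn
      · intro a ha; exact hubd a (mem_rep ha)
      · rw [count_rep, hucnt]; exact Nat.mul_div_cancel' hjd
      · rw [hperrep, hulen, Nat.div_div_self hjn (by omega)]
    · -- injective
      intro u hu u' hu' heq
      rw [mem_Pf] at hu hu'
      have h1 : (rep u j).take u.length = u := take_rep u j (by omega)
      have h2 : (rep u' j).take u'.length = u' := take_rep u' j (by omega)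
      rw [← h1, ← h2, heq, hu.1, hu'.1]
    · -- surjective
      intro w hw
      rw [Finset.mem_filter, mem_Wf] at hw
      obtain ⟨⟨hlen, hbd, hcnt⟩, hper⟩ := hw
      have hwne : w ≠ [] := by
        intro h; rw [h] at hlen; simp at hlen; omega
      have hpd : per w ∣ n := by rw [← hlen]; exact per_dvd_length hwne
      have hpval : per w = n / j := by
        rw [← hper, Nat.div_div_self hpd (by omega)]
      refine ⟨primRoot w, ?_, ?_⟩
      · rw [mem_Pf]
        have hrlen : (primRoot w).length = n / j := by
          rw [primRoot_length hwne, hpval]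
        refine ⟨hrlen, ?_, ?_, prim_primRoot hwne⟩
        · intro a ha
          exact hbd a (List.take_subset _ _ ha)
        · -- count
          have hrep := eq_rep_primRoot hwne
          rw [hlen] at hrep
          have hc : w.count 1 = (n / per w) * (primRoot w).count 1 := by
            conv_lhs => rw [hrep]
            rw [count_rep]
          rw [hcnt, hper] at hc
          rw [hc, Nat.mul_div_cancel_left _ hj0]
      · have hrep := eq_rep_primRoot hwne
        rw [hlen, hper] at hrep
        exact hrep.symm

lemma rotate_len_mul (w : List ℕ) (k : ℕ) : w.rotate (w.length * k) = w := by
  induction k with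
  | zero => simp
  | succ k ih =>
    rw [Nat.mul_succ, ← List.rotate_rotate, ih, List.rotate_length]

lemma rotate_inv {w : List ℕ} (hw : w ≠ []) (i : ℕ) :
    (w.rotate i).rotate (w.length - i % w.length) = w := by
  have hn : 0 < w.length := List.length_pos_iff.2 hw
  rw [List.rotate_rotate]
  have h1 : i % w.length < w.length := Nat.mod_lt _ hn
  have h2 : i + (w.length - i % w.length) = w.length * (i / w.length + 1) := by
    have := Nat.div_add_mod i w.length
    rw [Nat.mul_add, Nat.mul_one]
    omega
  rw [h2, rotate_len_mul]

lemma lyndon_prim {w : List ℕ} (h : IsLyndon w) : Prim w := by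
  refine ⟨h.1, ?_⟩
  by_contra hne
  have hlt : per w < w.length := lt_of_le_of_ne (per_le h.1) hne
  have := h.2 (per w) (per_pos h.1) hlt
  rw [rotate_per h.1] at this
  exact lt_irrefl _ this

lemma lyndon_min {w : List ℕ} (h : IsLyndon w) (i : ℕ) : w ≤ w.rotate i := by
  have hn : 0 < w.length := List.length_pos_iff.2 h.1
  rw [← List.rotate_mod]
  rcases Nat.eq_zero_or_pos (i % w.length) with h0 | h0
  · rw [h0]; simp
  · exact le_of_lt (h.2 _ h0 (Nat.mod_lt _ hn))

lemma lyndon_rotate_unique {u u' : List ℕ} (hu : IsLyndon u) (hu' : IsLyndon u')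
    (m : ℕ) (h : u = u'.rotate m) : u = u' := by
  apply _root_.le_antisymm
  · have h1 : u.rotate (u'.length - m % u'.length) = u' := by
      rw [h]; exact rotate_inv hu'.1 m
    rw [← h1]
    exact lyndon_min hu _
  · rw [h]; exact lyndon_min hu' m

open scoped Classical in
noncomputable def Lf (n d : ℕ) : Finset (List ℕ) := (Wf n d).filter (fun w => IsLyndon w)

open scoped Classical in
lemma mem_Lf {n d : ℕ} {w : List ℕ} :
    w ∈ Lf n d ↔ w.length = n ∧ (∀ a ∈ w, a < 2) ∧ w.count 1 = d ∧ IsLyndon w := by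
  rw [Lf]; classical
  rw [Finset.mem_filter, mem_Wf]; tauto

/-- Lemma (III): each primitive class of size `n` contains a unique Lyndon word -/
lemma card_Pf_eq (n d : ℕ) (hn : 1 ≤ n) :
    (Pf n d).card = n * (Lf n d).card := by
  classical
  have hcard : n * (Lf n d).card = (Finset.range n ×ˢ Lf n d).card := by
    rw [Finset.card_product, Finset.card_range]
  rw [hcard]
  symm
  apply Finset.card_bij (fun p _ => p.2.rotate p.1)
  · rintro ⟨i, u⟩ hp
    rw [Finset.mem_product, Finset.mem_range, mem_Lf] at hp
    have hi := hp.1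
    have hlen := hp.2.1
    have hbd := hp.2.2.1
    have hcnt := hp.2.2.2.1
    have hlyn := hp.2.2.2.2
    have hune : u ≠ [] := hlyn.1
    have hprim : Prim u := lyndon_prim hlyn
    rw [mem_Pf]
    refine ⟨by simp [hlen], ?_, ?_, ?_⟩
    · intro a ha
      exact hbd a ((List.rotate_perm u i).subset ha)
    · rw [(List.rotate_perm u i).count_eq, hcnt]
    · exact ⟨rotate_ne_nil hune i, by rw [per_rotate hune, List.length_rotate, hprim.2]⟩
  · rintro ⟨i, u⟩ hp ⟨i', u'⟩ hp' heq
    simp only at heq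
    rw [Finset.mem_product, Finset.mem_range, mem_Lf] at hp hp'
    have hi := hp.1
    have hlen := hp.2.1
    have hlyn := hp.2.2.2.2
    have hi' := hp'.1
    have hlen' := hp'.2.1
    have hlyn' := hp'.2.2.2.2
    have hune : u ≠ [] := hlyn.1
    have hune' : u' ≠ [] := hlyn'.1
    have huu : u = u' := by
      apply lyndon_rotate_unique hlyn hlyn' (i' + (u.length - i % u.length))
      rw [← List.rotate_rotate, ← heq]
      exact (rotate_inv hune i).symm
    subst huu
    have hii : i = i' := by
      rcases Nat.le_total i i' with hle | hle
      · have h1 : u.rotate (i' - i) = u := rotate_sub_eq_self hle heq.symm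
        have h2 := per_dvd_of_rotate_eq hune h1
        rw [(lyndon_prim hlyn).2] at h2
        rcases Nat.eq_zero_or_pos (i' - i) with h0 | h0
        · omega
        · have := Nat.le_of_dvd h0 h2; omega
      · have h1 : u.rotate (i - i') = u := rotate_sub_eq_self hle heq
        have h2 := per_dvd_of_rotate_eq hune h1
        rw [(lyndon_prim hlyn).2] at h2
        rcases Nat.eq_zero_or_pos (i - i') with h0 | h0
        · omega
        · have := Nat.le_of_dvd h0 h2; omega
    simp [hii]
  · intro w hw
    rw [mem_Pf] at hw
    obtain ⟨hlen, hbd, hcnt, hprim⟩ := hw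
    have hwne : w ≠ [] := hprim.1
    have hn0 : 0 < n := hn
    obtain ⟨i₀, hi₀mem, hi₀min⟩ :=
      Finset.exists_min_image (Finset.range n) (fun i => w.rotate i) ⟨0, by simp; omega⟩
    set u := w.rotate i₀ with hu
    have hune : u ≠ [] := rotate_ne_nil hwne i₀
    have hulen : u.length = n := by rw [hu, List.length_rotate, hlen]
    have hlyn : IsLyndon u := by
      refine ⟨hune, ?_⟩
      intro j hj0 hjlen
      have hle : u ≤ u.rotate j := by
        have e1 : u.rotate j = w.rotate ((i₀ + j) % n) := by
          rw [hu, List.rotate_rotate, ← hlen, List.rotate_mod]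
        rw [e1]
        exact hi₀min _ (Finset.mem_range.2 (Nat.mod_lt _ hn0))
      rcases eq_or_lt_of_le hle with heq | hlt
      · exfalso
        have h2 := per_dvd_of_rotate_eq hune heq.symm
        rw [per_rotate hwne, hprim.2, hlen] at h2
        have := Nat.le_of_dvd hj0 h2
        rw [hulen] at hjlen
        omega
      · exact hlt
    refine ⟨⟨(n - i₀ % n) % n, u⟩, ?_, ?_⟩
    · rw [Finset.mem_product, Finset.mem_range, mem_Lf]
      refine ⟨Nat.mod_lt _ hn0, hulen, ?_, ?_, hlyn⟩
      · intro a ha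
        exact hbd a ((List.rotate_perm w i₀).subset ha)
      · rw [(List.rotate_perm w i₀).count_eq, hcnt]
    · show u.rotate ((n - i₀ % n) % n) = w
      rw [← hulen, List.rotate_mod, hulen, hu]
      have hthis : (w.rotate i₀).rotate (w.length - i₀ % w.length) = w := rotate_inv hwne i₀
      rw [hlen] at hthis
      exact hthis

end LyndonCountAux


lemma L_eq_card_Lf (n d : ℕ) : L n d = (Lf n d).card := by
  rw [L]
  have hset : {w : List ℕ | w.length = n ∧ (∀ a ∈ w, a < 2) ∧ w.count 1 = d ∧ IsLyndon w}
      = ↑(Lf n d) := by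
    ext w
    simp only [Set.mem_setOf_eq, Finset.mem_coe, mem_Lf]
  rw [hset, Set.ncard_coe_finset]


open ArithmeticFunction in
/-- Enumeration formula for binary Lyndon words with fixed density. -/
theorem lyndon_count_formula (n d : ℕ) (hn : 1 ≤ n) (hd : d ≤ n) :
    (n : ℤ) * L n d =
      ∑ j ∈ (Nat.gcd n d).divisors, moebius j * (Nat.choose (n / j) (d / j) : ℤ) := by
  classical
  set g := Nat.gcd n d with hg
  have hg0 : 0 < g := Nat.gcd_pos_of_pos_left d hn
  set n' := n / g with hn'
  set d' := d / g with hd'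
  have hgn : g ∣ n := Nat.gcd_dvd_left n d
  have hgd : g ∣ d := Nat.gcd_dvd_right n d
  have hne : g * n' = n := Nat.mul_div_cancel' hgn
  have hde : g * d' = d := Nat.mul_div_cancel' hgd
  have hco : Nat.gcd n' d' = 1 := Nat.coprime_div_gcd_div_gcd hg0
  have hn'pos : 1 ≤ n' := Nat.div_pos (Nat.le_of_dvd (by omega) hgn) hg0
  have hd'le : d' ≤ n' := Nat.div_le_div_right hd
  have key : ∀ e, 0 < e →
      ∑ i ∈ e.divisors, ((Pf (i*n') (i*d')).card : ℤ) = ((e*n').choose (e*d') : ℤ) := by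
    intro e he
    have h1 : 1 ≤ e * n' := Nat.mul_pos he hn'pos
    have h2 : e * d' ≤ e * n' := Nat.mul_le_mul_left e hd'le
    have hgcd : Nat.gcd (e*n') (e*d') = e := by
      rw [Nat.gcd_mul_left, hco, Nat.mul_one]
    have h3 := card_Wf_eq_sum (e*n') (e*d') h1 h2
    rw [card_Wf, hgcd] at h3
    have h4 : ∀ j ∈ e.divisors,
        (Pf ((e*n')/j) ((e*d')/j)).card = (Pf ((e/j)*n') ((e/j)*d')).card := by
      intro j hj
      rw [Nat.mem_divisors] at hj
      have e1 : (e*n')/j = (e/j)*n' := by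
        rw [Nat.mul_comm e n', Nat.mul_div_assoc n' hj.1, Nat.mul_comm]
      have e2 : (e*d')/j = (e/j)*d' := by
        rw [Nat.mul_comm e d', Nat.mul_div_assoc d' hj.1, Nat.mul_comm]
      rw [e1, e2]
    rw [Finset.sum_congr rfl h4] at h3
    have h5 : ∑ j ∈ e.divisors, (Pf ((e/j)*n') ((e/j)*d')).card
        = ∑ i ∈ e.divisors, (Pf (i*n') (i*d')).card :=
      Nat.sum_div_divisors e (fun i => (Pf (i*n') (i*d')).card)
    rw [h5] at h3
    exact_mod_cast h3.symm
  have inv := (ArithmeticFunction.sum_eq_iff_sum_mul_moebius_eq (R := ℤ)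
      (f := fun i => ((Pf (i*n') (i*d')).card : ℤ))
      (g := fun e => ((e*n').choose (e*d') : ℤ))).1 key g hg0
  simp only [Int.cast_id] at inv
  have inv2 := (Nat.sum_divisorsAntidiagonal (n := g)
      (fun a b => (moebius a : ℤ) * (((b*n').choose (b*d') : ℕ) : ℤ))).symm.trans inv
  have hterm : ∀ j ∈ g.divisors,
      (moebius j : ℤ) * ((((g/j)*n').choose ((g/j)*d') : ℕ) : ℤ)
      = moebius j * ((n / j).choose (d / j) : ℤ) := by
    intro j hj
    rw [Nat.mem_divisors] at hj
    have e1 : (g/j)*n' = n / j := by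
      rw [← hne, Nat.mul_comm g n', Nat.mul_div_assoc n' hj.1, Nat.mul_comm]
    have e2 : (g/j)*d' = d / j := by
      rw [← hde, Nat.mul_comm g d', Nat.mul_div_assoc d' hj.1, Nat.mul_comm]
    rw [e1, e2]
  rw [Finset.sum_congr rfl hterm] at inv2
  rw [inv2, hne, hde, card_Pf_eq n d hn, L_eq_card_Lf]
  push_cast
  ring
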